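/- Let P ∈ ℝ^{k×k} be symmetric positive definite and let H ∈ ℝ^{k×k} be symmetric with α·I ⪯ −H for some α ∈ ℝ satisfying λ_min(P) > α⁻. Then I − P⁻¹H is invertible and its P-weighted matrix norm satisfies ‖(I − P⁻¹H)⁻¹‖_P ≤ 1 − α⁺/(λ_max(P) + α⁺) + α⁻/(λ_min(P) − α⁻). (This is the bound on the Jacobian dθ_{t|t}/dθ_{t|t−1} = (I − P⁻¹H)⁻¹ of the implicit score-driven update, Lemma 1, inequality (8).) -/

import Mathlib

open Matrix

/-- Smallest eigenvalue of a (Hermitian) real matrix; junk value 0 otherwise. -/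
noncomputable def lMin {k : ℕ} (A : Matrix (Fin k) (Fin k) ℝ) : ℝ :=
  letI := Classical.propDecidable A.IsHermitian
  if h : A.IsHermitian then ⨅ i, h.eigenvalues i else 0

/-- Largest eigenvalue of a (Hermitian) real matrix; junk value 0 otherwise. -/
noncomputable def lMax {k : ℕ} (A : Matrix (Fin k) (Fin k) ℝ) : ℝ :=
  letI := Classical.propDecidable A.IsHermitian
  if h : A.IsHermitian then ⨆ i, h.eigenvalues i else 0

/-- P-weighted squared vector norm `‖x‖_P² = xᵀ P x`. -/
def wq {k : ℕ} (P : Matrix (Fin k) (Fin k) ℝ) (x : Fin k → ℝ) : ℝ := x ⬝ᵥ P *ᵥ x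

/-- Induced P-weighted matrix norm `‖A‖_P = sup_{x ≠ 0} ‖Ax‖_P / ‖x‖_P`. -/
noncomputable def wMatNorm {k : ℕ} (P A : Matrix (Fin k) (Fin k) ℝ) : ℝ :=
  sSup {r : ℝ | ∃ x : Fin k → ℝ, x ≠ 0 ∧ r = Real.sqrt (wq P (A *ᵥ x)) / Real.sqrt (wq P x)}

/-- symmetry of the bilinear form of a real Hermitian matrix -/
lemma aux_dot_symm {k : ℕ} (P : Matrix (Fin k) (Fin k) ℝ) (hP : P.IsHermitian)
    (x y : Fin k → ℝ) : x ⬝ᵥ P *ᵥ y = y ⬝ᵥ P *ᵥ x := by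
  rw [dotProduct_mulVec, ← mulVec_transpose,
    ← hP.eq.symm.trans (conjTranspose_eq_transpose_of_trivial P), dotProduct_comm]

/-- Cauchy–Schwarz for a PSD real quadratic form -/
lemma aux_cs {k : ℕ} {P : Matrix (Fin k) (Fin k) ℝ} (hP : P.PosSemidef) (x y : Fin k → ℝ) :
    (x ⬝ᵥ P *ᵥ y) ^ 2 ≤ (x ⬝ᵥ P *ᵥ x) * (y ⬝ᵥ P *ᵥ y) := by
  have hsymm := aux_dot_symm P hP.1 x y
  have key : ∀ t : ℝ,
      0 ≤ (y ⬝ᵥ P *ᵥ y) * (t * t) + (2 * (x ⬝ᵥ P *ᵥ y)) * t + (x ⬝ᵥ P *ᵥ x) := by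
    intro t
    have h0 := hP.dotProduct_mulVec_nonneg (t • y + x)
    simp only [star_trivial, mulVec_add, mulVec_smul, dotProduct_add, add_dotProduct,
      dotProduct_smul, smul_dotProduct, smul_eq_mul] at h0
    rw [← hsymm] at h0
    nlinarith [h0]
  have hd := discrim_le_zero key
  rw [discrim] at hd
  nlinarith [hd]

/-- Rayleigh quotient bounds for a real Hermitian matrix. -/
lemma aux_rayleigh {k : ℕ} {A : Matrix (Fin k) (Fin k) ℝ} (hA : A.IsHermitian) (y : Fin k → ℝ) :
    (⨅ i, hA.eigenvalues i) * (y ⬝ᵥ y) ≤ y ⬝ᵥ A *ᵥ y ∧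
      y ⬝ᵥ A *ᵥ y ≤ (⨆ i, hA.eigenvalues i) * (y ⬝ᵥ y) := by
  rcases Nat.eq_zero_or_pos k with hk | hk
  · subst hk; simp [dotProduct]
  haveI : Nonempty (Fin k) := ⟨⟨0, hk⟩⟩
  set U : Matrix (Fin k) (Fin k) ℝ := (hA.eigenvectorUnitary : Matrix (Fin k) (Fin k) ℝ) with hU
  set d : Fin k → ℝ := hA.eigenvalues with hd
  have hsU : star U = Uᵀ := by
    rw [Matrix.star_eq_conjTranspose, conjTranspose_eq_transpose_of_trivial]
  set z : Fin k → ℝ := Uᵀ *ᵥ y with hz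
  have hUU : U * Uᵀ = 1 := by
    rw [← hsU]; exact (Matrix.mem_unitaryGroup_iff).mp hA.eigenvectorUnitary.2
  have h1 : y ⬝ᵥ A *ᵥ y = z ⬝ᵥ (diagonal d) *ᵥ z := by
    conv_lhs => rw [hA.spectral_theorem, Unitary.conjStarAlgAut_apply]
    rw [hsU, ← mulVec_mulVec, ← mulVec_mulVec, dotProduct_mulVec, ← mulVec_transpose]
    congr 1
  have h2 : y ⬝ᵥ y = z ⬝ᵥ z := by
    rw [hz, dotProduct_mulVec, vecMul_transpose, mulVec_mulVec, hUU, one_mulVec]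
  have h3 : z ⬝ᵥ (diagonal d) *ᵥ z = ∑ i, d i * (z i) ^ 2 := by
    simp only [dotProduct, mulVec_diagonal]
    exact Finset.sum_congr rfl fun i _ => by ring
  have h4 : z ⬝ᵥ z = ∑ i, (z i) ^ 2 := by
    simp only [dotProduct]
    exact Finset.sum_congr rfl fun i _ => by ring
  have hbb : BddBelow (Set.range d) := (Set.finite_range d).bddBelow
  have hba : BddAbove (Set.range d) := (Set.finite_range d).bddAbove
  rw [h1, h2, h3, h4]
  constructor
  · rw [Finset.mul_sum]
    exact Finset.sum_le_sum fun i _ =>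
      mul_le_mul_of_nonneg_right (ciInf_le hbb i) (sq_nonneg _)
  · rw [Finset.mul_sum]
    exact Finset.sum_le_sum fun i _ =>
      mul_le_mul_of_nonneg_right (le_ciSup hba i) (sq_nonneg _)

theorem isd_update_stability {k : ℕ} (P H : Matrix (Fin k) (Fin k) ℝ)
    (hP : P.PosDef) (hH : H.IsHermitian) (α : ℝ)
    (hcurv : (-H - α • (1 : Matrix (Fin k) (Fin k) ℝ)).PosSemidef)
    (hpen : max (-α) 0 < lMin P) :
    IsUnit (1 - P⁻¹ * H) ∧
      wMatNorm P ((1 - P⁻¹ * H)⁻¹) ≤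
        1 - max α 0 / (lMax P + max α 0) + max (-α) 0 / (lMin P - max (-α) 0) := by
  have hPh : P.IsHermitian := hP.isHermitian
  have hlMin : lMin P = ⨅ i, hPh.eigenvalues i := by rw [lMin, dif_pos hPh]
  have hlMax : lMax P = ⨆ i, hPh.eigenvalues i := by rw [lMax, dif_pos hPh]
  -- trivial case k = 0
  rcases Nat.eq_zero_or_pos k with hk | hk
  · exfalso
    subst hk
    rw [hlMin, Real.iInf_of_isEmpty] at hpen
    exact absurd hpen (not_lt.2 (le_max_right _ _))
  haveI : Nonempty (Fin k) := ⟨⟨0, hk⟩⟩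
  -- basic positivity facts
  have hm_pos : 0 < lMin P := lt_of_le_of_lt (le_max_right (-α) 0) hpen
  have hmMx : lMin P ≤ lMax P := by
    rw [hlMin, hlMax]
    exact le_trans (ciInf_le ((Set.finite_range _).bddBelow) (⟨0, hk⟩ : Fin k))
      (le_ciSup ((Set.finite_range _).bddAbove) (⟨0, hk⟩ : Fin k))
  have hMx_pos : 0 < lMax P := lt_of_lt_of_le hm_pos hmMx
  have hma : -α < lMin P := lt_of_le_of_lt (le_max_left _ _) hpen
  -- Rayleigh bounds for P
  have hray : ∀ y : Fin k → ℝ,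
      lMin P * (y ⬝ᵥ y) ≤ wq P y ∧ wq P y ≤ lMax P * (y ⬝ᵥ y) := by
    intro y
    rw [hlMin, hlMax]
    exact aux_rayleigh hPh y
  -- curvature bound
  have hHa : ∀ y : Fin k → ℝ, α * (y ⬝ᵥ y) ≤ -(y ⬝ᵥ H *ᵥ y) := by
    intro y
    have h0 := hcurv.dotProduct_mulVec_nonneg y
    simp only [star_trivial, sub_mulVec, neg_mulVec, smul_mulVec, one_mulVec,
      dotProduct_sub, dotProduct_neg, dotProduct_smul, smul_eq_mul] at h0
    linarith
  have hdots : ∀ y : Fin k → ℝ, 0 ≤ y ⬝ᵥ y := fun y =>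
    Finset.sum_nonneg fun i _ => mul_self_nonneg (y i)
  -- the contraction constant
  obtain ⟨c, hc_pos, hkey, hBc⟩ : ∃ c : ℝ, 0 < c ∧
      (∀ y : Fin k → ℝ, c * wq P y ≤ wq P y - y ⬝ᵥ H *ᵥ y) ∧
      1 - max α 0 / (lMax P + max α 0) + max (-α) 0 / (lMin P - max (-α) 0) = 1 / c := by
    rcases le_or_gt 0 α with h | h
    · have hα : 0 ≤ α / lMax P := div_nonneg h hMx_pos.le
      refine ⟨1 + α / lMax P, ?_, fun y => ?_, ?_⟩
      · linarith
      · have h1 := (hray y).2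
        have h3 := hHa y
        have h5 : (α / lMax P) * wq P y ≤ α * (y ⬝ᵥ y) := by
          rw [div_mul_eq_mul_div, div_le_iff₀ hMx_pos]
          nlinarith
        nlinarith
      · rw [max_eq_left h, max_eq_right (neg_nonpos.mpr h)]
        have h1 : 0 < lMax P + α := by linarith
        field_simp
        ring
    · have hc1 : 0 < 1 + α / lMin P := by
        rw [show (1 : ℝ) + α / lMin P = (lMin P + α) / lMin P by field_simp]
        exact div_pos (by linarith) hm_pos
      refine ⟨1 + α / lMin P, hc1, fun y => ?_, ?_⟩
      · have h1 := (hray y).1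
        have h3 := hHa y
        have h5 : (α / lMin P) * wq P y ≤ α * (y ⬝ᵥ y) := by
          rw [div_mul_eq_mul_div, div_le_iff₀ hm_pos]
          nlinarith
        nlinarith
      · rw [max_eq_right h.le, max_eq_left (by linarith : (0:ℝ) ≤ -α)]
        have h1 : 0 < lMin P - -α := by linarith
        have h2 : 0 < lMin P + α := by linarith
        field_simp
        ring
  -- wq nonneg / pos
  have hwq_pos : ∀ y : Fin k → ℝ, y ≠ 0 → 0 < wq P y := by
    intro y hy
    have := hP.dotProduct_mulVec_pos hy
    simpa [wq] using this
  have hwq_nonneg : ∀ y : Fin k → ℝ, 0 ≤ wq P y := by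
    intro y
    have := hP.posSemidef.dotProduct_mulVec_nonneg y
    simpa [wq] using this
  -- P * (1 - P⁻¹ H) = P - H
  have hPdet : IsUnit P.det := isUnit_iff_ne_zero.2 hP.det_pos.ne'
  have hPM : P * (1 - P⁻¹ * H) = P - H := by
    rw [mul_sub, mul_one, ← mul_assoc, mul_nonsing_inv _ hPdet, one_mul]
  have hform : ∀ y : Fin k → ℝ, y ⬝ᵥ P *ᵥ ((1 - P⁻¹ * H) *ᵥ y) = wq P y - y ⬝ᵥ H *ᵥ y := by
    intro y
    rw [mulVec_mulVec, hPM, sub_mulVec, dotProduct_sub]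
    rfl
  -- invertibility
  have hdet : (1 - P⁻¹ * H).det ≠ 0 := by
    intro h0
    obtain ⟨v, hv, hMv⟩ := (Matrix.exists_mulVec_eq_zero_iff).2 h0
    have h1 := hform v
    rw [hMv, mulVec_zero, dotProduct_zero] at h1
    have h2 := hkey v
    have h3 := hwq_pos v hv
    nlinarith
  have hUnit : IsUnit (1 - P⁻¹ * H) :=
    (Matrix.isUnit_iff_isUnit_det _).2 (isUnit_iff_ne_zero.2 hdet)
  refine ⟨hUnit, ?_⟩
  rw [hBc]
  have hB_nonneg : (0:ℝ) ≤ 1 / c := by positivity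
  apply Real.sSup_le _ hB_nonneg
  rintro r ⟨x, hx, rfl⟩
  set y : Fin k → ℝ := (1 - P⁻¹ * H)⁻¹ *ᵥ x with hy
  have hxy : (1 - P⁻¹ * H) *ᵥ y = x := by
    rw [hy, mulVec_mulVec, mul_nonsing_inv _ ((Matrix.isUnit_iff_isUnit_det _).1 hUnit),
      one_mulVec]
  have hb : x ⬝ᵥ P *ᵥ y = wq P y - y ⬝ᵥ H *ᵥ y := by
    rw [aux_dot_symm P hPh x y, ← hxy, hform y]
  have hbc : c * wq P y ≤ x ⬝ᵥ P *ᵥ y := by rw [hb]; exact hkey y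
  have hcs : (x ⬝ᵥ P *ᵥ y) ^ 2 ≤ wq P x * wq P y := aux_cs hP.posSemidef x y
  have hq := hwq_nonneg y
  have hp := hwq_pos x hx
  have key2 : wq P y ≤ (1 / c) ^ 2 * wq P x := by
    rcases eq_or_lt_of_le hq with hq0 | hq0
    · rw [← hq0]; positivity
    · have hcq : 0 < c * wq P y := mul_pos hc_pos hq0
      have hb2 : (c * wq P y) ^ 2 ≤ (x ⬝ᵥ P *ᵥ y) ^ 2 := pow_le_pow_left₀ hcq.le hbc 2
      have h1 : c ^ 2 * wq P y ≤ wq P x := by nlinarith [hb2, hcs, hq0]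
      rw [show (1 / c) ^ 2 * wq P x = wq P x / c ^ 2 by field_simp]
      rw [le_div_iff₀ (by positivity)]
      linarith
  rw [div_le_iff₀ (Real.sqrt_pos.2 hp)]
  calc Real.sqrt (wq P y) ≤ Real.sqrt ((1 / c) ^ 2 * wq P x) := Real.sqrt_le_sqrt key2
    _ = (1 / c) * Real.sqrt (wq P x) := by
        rw [Real.sqrt_mul (sq_nonneg _), Real.sqrt_sq hB_nonneg]
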